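/- Let $\mathfrak{g}$ be a finite-dimensional simple complex Lie algebra, $\lambda, \mu$ dominant integral weights, and let $R$ be the layer polynomial, $R(\nu) = |P(\nu)|$, counting the number of distinct weights of $L(\nu)$. If $\mu < \lambda$ (i.e., $\lambda - \mu$ is a nonzero non-negative integer combination of simple roots), then $R(\mu) < R(\lambda)$. -/

import Mathlib

def colRoot {r : ℕ} (A : Fin r → Fin r → ℤ) (i : Fin r) : Fin r → ℤ := fun j => A j i

def simpleRefl {r : ℕ} (A : Fin r → Fin r → ℤ) (i : Fin r) :
    (Fin r → ℤ) → (Fin r → ℤ) :=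
  fun μ => μ - μ i • colRoot A i

def weylMonoid {r : ℕ} (A : Fin r → Fin r → ℤ) : Submonoid (Function.End (Fin r → ℤ)) :=
  Submonoid.closure (Set.range (simpleRefl A))

def rootLE {r : ℕ} (A : Fin r → Fin r → ℤ) (μ lam : Fin r → ℤ) : Prop :=
  ∃ n : Fin r → ℕ, lam = μ + ∑ i, (n i : ℤ) • colRoot A i

def weightSet {r : ℕ} (A : Fin r → Fin r → ℤ) (lam : Fin r → ℤ) : Set (Fin r → ℤ) :=
  {μ | ∀ w ∈ weylMonoid A, rootLE A (w μ) lam}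

namespace Stmt16

open scoped Matrix

variable {r : ℕ} (A : Fin r → Fin r → ℤ)

/-! ### Basic facts about simple reflections and words -/

lemma mulE (f g : Function.End (Fin r → ℤ)) (x : Fin r → ℤ) : (f * g) x = f (g x) := rfl

lemma oneE (x : Fin r → ℤ) : (1 : Function.End (Fin r → ℤ)) x = x := rfl

/-- simple reflection as an element of `Function.End` -/
def sR (i : Fin r) : Function.End (Fin r → ℤ) := simpleRefl A i

lemma sR_apply (i : Fin r) (x : Fin r → ℤ) (k : Fin r) :
    sR A i x k = x k - x i * A k i := by
  simp [sR, simpleRefl, colRoot, mul_comm]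

lemma simpleRefl_apply (i : Fin r) (x : Fin r → ℤ) (k : Fin r) :
    simpleRefl A i x k = x k - x i * A k i := by
  simp [simpleRefl, colRoot, mul_comm]

variable (hdiag : ∀ i, A i i = 2)

include hdiag in
lemma sR_invol (i : Fin r) :
    sR A i * sR A i = 1 := by
  funext x
  show sR A i (sR A i x) = x
  funext k
  rw [sR_apply, sR_apply, sR_apply, hdiag]
  ring

/-- the word map: composite of simple reflections along a list -/
def act (l : List (Fin r)) : Function.End (Fin r → ℤ) := (l.map (sR A)).prod

@[simp] lemma act_nil : act A ([] : List (Fin r)) = 1 := List.prod_nil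

lemma act_cons (i : Fin r) (l : List (Fin r)) :
    act A (i :: l) = sR A i * act A l := by
  simp [act]

lemma act_append (l l' : List (Fin r)) :
    act A (l ++ l') = act A l * act A l' := by
  simp [act]

lemma act_singleton (i : Fin r) : act A [i] = sR A i := by
  simp [act]

lemma act_mem (l : List (Fin r)) : act A l ∈ weylMonoid A := by
  induction l with
  | nil => exact Submonoid.one_mem _
  | cons i l ih =>
      rw [act_cons]
      exact Submonoid.mul_mem _ (Submonoid.subset_closure ⟨i, rfl⟩) ih

lemma mem_weylMonoid_iff {w : Function.End (Fin r → ℤ)} :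
    w ∈ weylMonoid A ↔ ∃ l : List (Fin r), act A l = w := by
  constructor
  · intro hw
    induction hw using Submonoid.closure_induction with
    | mem x hx => obtain ⟨i, hi⟩ := hx; exact ⟨[i], by rw [act_singleton]; exact hi⟩
    | one => exact ⟨[], rfl⟩
    | mul x y _ _ hx hy =>
        obtain ⟨l1, rfl⟩ := hx; obtain ⟨l2, rfl⟩ := hy
        exact ⟨l1 ++ l2, act_append A l1 l2⟩
  · rintro ⟨l, rfl⟩; exact act_mem A l

lemma sR_add (i : Fin r) (x y : Fin r → ℤ) :
    sR A i (x + y) = sR A i x + sR A i y := by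
  funext k
  simp only [Pi.add_apply, sR_apply]
  ring

lemma sR_smul (i : Fin r) (c : ℤ) (x : Fin r → ℤ) :
    sR A i (c • x) = c • sR A i x := by
  funext k
  simp only [Pi.smul_apply, sR_apply, smul_eq_mul]
  ring

lemma act_add (l : List (Fin r)) (x y : Fin r → ℤ) :
    act A l (x + y) = act A l x + act A l y := by
  induction l with
  | nil => simp [oneE]
  | cons i l ih => rw [act_cons]; simp only [mulE, ih, sR_add]

lemma act_smul (l : List (Fin r)) (c : ℤ) (x : Fin r → ℤ) :
    act A l (c • x) = c • act A l x := by
  induction l with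
  | nil => simp [oneE]
  | cons i l ih => rw [act_cons]; simp only [mulE, ih, sR_smul]

lemma mem_add {w : Function.End (Fin r → ℤ)} (hw : w ∈ weylMonoid A) (x y : Fin r → ℤ) :
    w (x + y) = w x + w y := by
  obtain ⟨l, rfl⟩ := (mem_weylMonoid_iff A).1 hw
  exact act_add A l x y

lemma mem_smul {w : Function.End (Fin r → ℤ)} (hw : w ∈ weylMonoid A) (c : ℤ) (x : Fin r → ℤ) :
    w (c • x) = c • w x := by
  obtain ⟨l, rfl⟩ := (mem_weylMonoid_iff A).1 hw
  exact act_smul A l c x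

/-! ### The invariant positive definite form -/

section Qform

variable (hfin : (weylMonoid A : Set (Function.End (Fin r → ℤ))).Finite)

noncomputable def Qf (x y : Fin r → ℤ) : ℤ :=
  ∑ w ∈ hfin.toFinset, ∑ k, w x k * w y k

lemma mem_toFinset_iff (w : Function.End (Fin r → ℤ)) :
    w ∈ hfin.toFinset ↔ w ∈ weylMonoid A := Set.Finite.mem_toFinset hfin

lemma one_mem_toFinset : (1 : Function.End (Fin r → ℤ)) ∈ hfin.toFinset :=
  (mem_toFinset_iff A hfin 1).2 (Submonoid.one_mem _)

lemma Qf_symm (x y : Fin r → ℤ) : Qf A hfin x y = Qf A hfin y x := by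
  unfold Qf
  congr 1; funext w; congr 1; funext k; ring

lemma Qf_add_right (x y z : Fin r → ℤ) :
    Qf A hfin x (y + z) = Qf A hfin x y + Qf A hfin x z := by
  unfold Qf
  rw [← Finset.sum_add_distrib]
  apply Finset.sum_congr rfl
  intro w hw
  rw [← Finset.sum_add_distrib]
  apply Finset.sum_congr rfl
  intro k _
  rw [mem_add A ((mem_toFinset_iff A hfin w).1 hw), Pi.add_apply]
  ring

lemma Qf_smul_right (c : ℤ) (x y : Fin r → ℤ) :
    Qf A hfin x (c • y) = c * Qf A hfin x y := by
  unfold Qf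
  rw [Finset.mul_sum]
  apply Finset.sum_congr rfl
  intro w hw
  rw [Finset.mul_sum]
  apply Finset.sum_congr rfl
  intro k _
  rw [mem_smul A ((mem_toFinset_iff A hfin w).1 hw), Pi.smul_apply, smul_eq_mul]
  ring

lemma Qf_add_left (x y z : Fin r → ℤ) :
    Qf A hfin (x + y) z = Qf A hfin x z + Qf A hfin y z := by
  rw [Qf_symm, Qf_add_right, Qf_symm A hfin z x, Qf_symm A hfin z y]

lemma Qf_smul_left (c : ℤ) (x y : Fin r → ℤ) :
    Qf A hfin (c • x) y = c * Qf A hfin x y := by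
  rw [Qf_symm, Qf_smul_right, Qf_symm]

lemma Qf_sum_right {ι : Type*} (s : Finset ι) (x : Fin r → ℤ) (f : ι → Fin r → ℤ) :
    Qf A hfin x (∑ i ∈ s, f i) = ∑ i ∈ s, Qf A hfin x (f i) := by
  classical
  induction s using Finset.induction with
  | empty =>
      simp only [Finset.sum_empty]
      have : (0 : Fin r → ℤ) = (0 : ℤ) • (0 : Fin r → ℤ) := by simp
      rw [this, Qf_smul_right]; ring
  | insert _ _ hnot ih =>
      rw [Finset.sum_insert hnot, Finset.sum_insert hnot, Qf_add_right, ih]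

variable (hdiag : ∀ i, A i i = 2)

include hdiag in
lemma Qf_invariant_gen (i : Fin r) (x y : Fin r → ℤ) :
    Qf A hfin (sR A i x) (sR A i y) = Qf A hfin x y := by
  unfold Qf
  apply Finset.sum_nbij' (fun w => w * sR A i) (fun w => w * sR A i)
  · intro w hw
    rw [mem_toFinset_iff] at hw ⊢
    exact Submonoid.mul_mem _ hw (Submonoid.subset_closure ⟨i, rfl⟩)
  · intro w hw
    rw [mem_toFinset_iff] at hw ⊢
    exact Submonoid.mul_mem _ hw (Submonoid.subset_closure ⟨i, rfl⟩)
  · intro w _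
    rw [mul_assoc, sR_invol A hdiag, mul_one]
  · intro w _
    rw [mul_assoc, sR_invol A hdiag, mul_one]
  · intro w _
    apply Finset.sum_congr rfl
    intro k _
    rw [mulE, mulE]

include hdiag in
lemma Qf_invariant_word (l : List (Fin r)) (x y : Fin r → ℤ) :
    Qf A hfin (act A l x) (act A l y) = Qf A hfin x y := by
  induction l with
  | nil => rw [act_nil]; rfl
  | cons i l ih =>
      rw [act_cons, mulE, mulE, Qf_invariant_gen A hdiag hfin, ih]

include hdiag in
lemma Qf_invariant (w : Function.End (Fin r → ℤ)) (hw : w ∈ weylMonoid A) (x y : Fin r → ℤ) :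
    Qf A hfin (w x) (w y) = Qf A hfin x y := by
  obtain ⟨l, rfl⟩ := (mem_weylMonoid_iff A).1 hw
  exact Qf_invariant_word A hdiag hfin l x y

include hdiag in
/-- `s_i(α_i) = -α_i`. -/
lemma sR_root_self (i : Fin r) : sR A i (colRoot A i) = (-1 : ℤ) • colRoot A i := by
  funext k
  rw [sR_apply]
  simp only [Pi.smul_apply, smul_eq_mul, colRoot]
  rw [hdiag]; ring

lemma sR_eq_sub (i : Fin r) (x : Fin r → ℤ) :
    sR A i x = x + (-(x i)) • colRoot A i := by
  funext k
  rw [sR_apply]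
  simp only [Pi.add_apply, Pi.smul_apply, smul_eq_mul, colRoot]
  ring

include hdiag in
lemma twoQ_root (x : Fin r → ℤ) (i : Fin r) :
    2 * Qf A hfin x (colRoot A i) = x i * Qf A hfin (colRoot A i) (colRoot A i) := by
  have h1 : Qf A hfin (sR A i x) (sR A i (colRoot A i)) = Qf A hfin x (colRoot A i) :=
    Qf_invariant_gen A hdiag hfin i x (colRoot A i)
  rw [sR_root_self A hdiag, sR_eq_sub, Qf_smul_right, Qf_add_left, Qf_smul_left] at h1
  linarith [h1]

lemma Qf_self_ge (x : Fin r → ℤ) : ∑ k, x k * x k ≤ Qf A hfin x x := by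
  unfold Qf
  have h1 : ∑ k, x k * x k = ∑ k, ((1 : Function.End (Fin r → ℤ)) x k *
      (1 : Function.End (Fin r → ℤ)) x k) := rfl
  rw [h1]
  apply Finset.single_le_sum (f := fun w : Function.End (Fin r → ℤ) => ∑ k, w x k * w x k)
  · intro w _
    apply Finset.sum_nonneg
    intro k _
    exact mul_self_nonneg _
  · exact one_mem_toFinset A hfin

include hdiag in
lemma q_pos (i : Fin r) : 0 < Qf A hfin (colRoot A i) (colRoot A i) := by
  have h1 : ∑ k, colRoot A i k * colRoot A i k ≤ Qf A hfin (colRoot A i) (colRoot A i) :=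
    Qf_self_ge A hfin (colRoot A i)
  have h2 : colRoot A i i * colRoot A i i ≤ ∑ k, colRoot A i k * colRoot A i k := by
    apply Finset.single_le_sum (f := fun k => colRoot A i k * colRoot A i k)
    · intro k _; exact mul_self_nonneg _
    · exact Finset.mem_univ i
  have h3 : colRoot A i i = 2 := hdiag i
  rw [h3] at h2
  linarith

end Qform

/-! ### Linear combinations of simple roots, the dominance order -/

def lc (c : Fin r → ℤ) : Fin r → ℤ := fun k => ∑ i, c i * A k i

lemma lc_eq_sum (c : Fin r → ℤ) : lc A c = ∑ i, c i • colRoot A i := by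
  funext k
  simp [lc, colRoot, Finset.sum_apply, mul_comm]

lemma lc_add (c c' : Fin r → ℤ) : lc A (c + c') = lc A c + lc A c' := by
  funext k
  simp only [lc, Pi.add_apply, ← Finset.sum_add_distrib]
  apply Finset.sum_congr rfl
  intro i _; ring

section withQ

variable (hdiag : ∀ i, A i i = 2)
variable (hfin : (weylMonoid A : Set (Function.End (Fin r → ℤ))).Finite)

lemma Qf_zero_right (x : Fin r → ℤ) : Qf A hfin x 0 = 0 := by
  have h : (0 : Fin r → ℤ) = (0 : ℤ) • (0 : Fin r → ℤ) := by simp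
  rw [h, Qf_smul_right]; ring

include hdiag in
lemma twoQ_lc (x c : Fin r → ℤ) :
    2 * Qf A hfin x (lc A c) =
      ∑ k, c k * (x k * Qf A hfin (colRoot A k) (colRoot A k)) := by
  rw [lc_eq_sum, Qf_sum_right, Finset.mul_sum]
  apply Finset.sum_congr rfl
  intro i _
  rw [Qf_smul_right]
  have h := twoQ_root A hdiag hfin x i
  linear_combination c i * h

include hdiag hfin in
lemma lc_indep (c : Fin r → ℤ) (h : lc A c = 0) : ∀ k, c k = 0 := by
  intro j
  have h1 : 2 * Qf A hfin (Pi.single j 1) (lc A c) = 0 := by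
    rw [h, Qf_zero_right]; ring
  rw [twoQ_lc A hdiag hfin] at h1
  rw [Finset.sum_eq_single j] at h1
  · simp only [Pi.single_eq_same, one_mul] at h1
    rcases mul_eq_zero.1 h1 with h2 | h2
    · exact h2
    · exact absurd h2 (ne_of_gt (q_pos A hdiag hfin j))
  · intro k _ hk
    rw [Pi.single_eq_of_ne hk]
    ring
  · intro hj; exact absurd (Finset.mem_univ j) hj

lemma rootLE_iff (x y : Fin r → ℤ) :
    rootLE A x y ↔ ∃ c : Fin r → ℤ, (∀ k, 0 ≤ c k) ∧ y = x + lc A c := by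
  constructor
  · rintro ⟨n, hn⟩
    refine ⟨fun k => (n k : ℤ), fun k => Int.ofNat_nonneg _, ?_⟩
    rw [hn, lc_eq_sum]
  · rintro ⟨c, hc, hy⟩
    refine ⟨fun k => (c k).toNat, ?_⟩
    rw [hy, lc_eq_sum]
    congr 1
    apply Finset.sum_congr rfl
    intro i _
    rw [Int.toNat_of_nonneg (hc i)]

lemma rootLE_refl (x : Fin r → ℤ) : rootLE A x x :=
  ⟨0, by simp⟩

lemma rootLE_trans {x y z : Fin r → ℤ} (h1 : rootLE A x y) (h2 : rootLE A y z) :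
    rootLE A x z := by
  rw [rootLE_iff] at h1 h2 ⊢
  obtain ⟨c1, hc1, hy⟩ := h1
  obtain ⟨c2, hc2, hz⟩ := h2
  refine ⟨c1 + c2, fun k => add_nonneg (hc1 k) (hc2 k), ?_⟩
  rw [hz, hy, lc_add]
  abel

include hdiag hfin in
lemma rootLE_antisymm {x y : Fin r → ℤ} (h1 : rootLE A x y) (h2 : rootLE A y x) :
    x = y := by
  rw [rootLE_iff] at h1 h2
  obtain ⟨c1, hc1, hy⟩ := h1
  obtain ⟨c2, hc2, hx⟩ := h2
  have h3 : x = x + (lc A c1 + lc A c2) := by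
    nth_rewrite 1 [hx, hy]
    abel
  have h4 : lc A (c1 + c2) = 0 := by
    rw [lc_add]
    exact (left_eq_add.mp h3)
  have h5 := lc_indep A hdiag hfin _ h4
  have h6 : ∀ k, c1 k = 0 := by
    intro k
    have := h5 k
    simp only [Pi.add_apply] at this
    linarith [hc1 k, hc2 k, this]
  have h7 : lc A c1 = 0 := by
    funext k
    simp only [lc]
    apply Finset.sum_eq_zero
    intro i _
    rw [h6 i]; ring
  rw [hy, h7, add_zero]

include hdiag in
lemma Qf_mono_dominant {x y : Fin r → ℤ} (hx : ∀ k, 0 ≤ x k) (hy : ∀ k, 0 ≤ y k)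
    (h : rootLE A x y) : Qf A hfin x x ≤ Qf A hfin y y := by
  rw [rootLE_iff] at h
  obtain ⟨c, hc, hyx⟩ := h
  have e1 : Qf A hfin y y = Qf A hfin y x + Qf A hfin y (lc A c) := by
    nth_rewrite 2 [hyx]
    rw [Qf_add_right]
  have e2 : Qf A hfin y x = Qf A hfin x x + Qf A hfin (lc A c) x := by
    nth_rewrite 1 [hyx]
    rw [Qf_add_left]
  have p1 : 0 ≤ 2 * Qf A hfin y (lc A c) := by
    rw [twoQ_lc A hdiag hfin]
    apply Finset.sum_nonneg
    intro k _
    exact mul_nonneg (hc k) (mul_nonneg (hy k) (le_of_lt (q_pos A hdiag hfin k)))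
  have p2 : 0 ≤ 2 * Qf A hfin (lc A c) x := by
    rw [Qf_symm, twoQ_lc A hdiag hfin]
    apply Finset.sum_nonneg
    intro k _
    exact mul_nonneg (hc k) (mul_nonneg (hx k) (le_of_lt (q_pos A hdiag hfin k)))
  linarith

lemma int_abs_le_mul_self (m : ℤ) : |m| ≤ m * m := by
  rcases eq_or_ne m 0 with h | h
  · simp [h]
  · have h1 : 1 ≤ |m| := Int.one_le_abs (by omega)
    calc |m| = 1 * |m| := (one_mul _).symm
    _ ≤ |m| * |m| := by
        apply mul_le_mul_of_nonneg_right h1 (abs_nonneg m)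
    _ = m * m := abs_mul_abs_self m

lemma abs_le_Qf (x : Fin r → ℤ) (k : Fin r) : |x k| ≤ Qf A hfin x x := by
  have h1 : x k * x k ≤ ∑ l, x l * x l := by
    apply Finset.single_le_sum (f := fun l => x l * x l)
    · intro l _; exact mul_self_nonneg _
    · exact Finset.mem_univ k
  have h2 := Qf_self_ge A hfin x
  have h3 := int_abs_le_mul_self (x k)
  linarith

/-! ### Dominant representatives in an orbit -/

include hdiag in
lemma exists_dominant_rep (μ : Fin r → ℤ) :
    ∃ w ∈ weylMonoid A, (∀ k, 0 ≤ w μ k) ∧ Qf A hfin (w μ) (w μ) = Qf A hfin μ μ := by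
  classical
  set S : Finset (Fin r → ℤ) := hfin.toFinset.image (fun w : Function.End (Fin r → ℤ) => w μ)
    with hS
  have hne : S.Nonempty := ⟨μ, Finset.mem_image.2 ⟨1, one_mem_toFinset A hfin, rfl⟩⟩
  obtain ⟨x, hxS, hmax⟩ := S.exists_max_image (fun y => 2 * Qf A hfin y (fun _ => 1)) hne
  obtain ⟨w, hwF, hwx⟩ := Finset.mem_image.1 hxS
  have hwW : w ∈ weylMonoid A := (mem_toFinset_iff A hfin w).1 hwF
  refine ⟨w, hwW, ?_, Qf_invariant A hdiag hfin w hwW μ μ⟩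
  intro k
  by_contra hneg
  push_neg at hneg
  have hSk : sR A k (w μ) ∈ S := by
    apply Finset.mem_image.2
    refine ⟨sR A k * w, ?_, rfl⟩
    rw [mem_toFinset_iff]
    exact Submonoid.mul_mem _ (Submonoid.subset_closure ⟨k, rfl⟩) hwW
  have hstep : 2 * Qf A hfin (sR A k (w μ)) (fun _ => 1) =
      2 * Qf A hfin (w μ) (fun _ => 1) - (w μ k) * Qf A hfin (colRoot A k) (colRoot A k) := by
    rw [sR_eq_sub, Qf_add_left, Qf_smul_left]
    have h2 : 2 * Qf A hfin (colRoot A k) (fun _ => 1) =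
        Qf A hfin (colRoot A k) (colRoot A k) := by
      rw [Qf_symm]
      have := twoQ_root A hdiag hfin (fun _ => 1) k
      simpa using this
    linear_combination (-(w μ k)) * h2
  have hlt : 2 * Qf A hfin (w μ) (fun _ => 1) <
      2 * Qf A hfin (sR A k (w μ)) (fun _ => 1) := by
    rw [hstep]
    have hq := q_pos A hdiag hfin k
    nlinarith [mul_pos (neg_pos.2 hneg) hq]
  have hmm := hmax _ hSk
  rw [← hwx] at hmm
  omega

end withQ

/-! ### Word length and parity -/

noncomputable def len (w : Function.End (Fin r → ℤ)) : ℕ :=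
  sInf {n | ∃ l : List (Fin r), l.length = n ∧ act A l = w}

lemma len_le {w : Function.End (Fin r → ℤ)} (l : List (Fin r)) (h : act A l = w) :
    len A w ≤ l.length :=
  Nat.sInf_le ⟨l, rfl, h⟩

lemma exists_min_word {w : Function.End (Fin r → ℤ)} (hw : ∃ l : List (Fin r), act A l = w) :
    ∃ l : List (Fin r), l.length = len A w ∧ act A l = w := by
  obtain ⟨l, hl⟩ := hw
  exact Nat.sInf_mem (⟨l.length, l, rfl, hl⟩ : {n | ∃ l : List (Fin r),
    l.length = n ∧ act A l = w}.Nonempty)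

lemma len_one : len A (1 : Function.End (Fin r → ℤ)) = 0 :=
  Nat.le_zero.1 (len_le A [] (act_nil A))

/-! parity via determinants -/

def matOf (i : Fin r) : Matrix (Fin r) (Fin r) ℤ :=
  1 + Matrix.replicateCol (Fin 1) (-(colRoot A i)) * Matrix.replicateRow (Fin 1) ((Pi.single i 1 : Fin r → ℤ))

lemma matOf_mulVec (i : Fin r) (x : Fin r → ℤ) : (matOf A i) *ᵥ x = sR A i x := by
  funext k
  rw [matOf, Matrix.add_mulVec, Matrix.one_mulVec, sR_apply]
  simp only [Pi.add_apply]
  have h : (Matrix.replicateCol (Fin 1) (-(colRoot A i)) * Matrix.replicateRow (Fin 1) ((Pi.single i 1 : Fin r → ℤ))) *ᵥ x =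
      fun k => (-(colRoot A i)) k * x i := by
    funext k'
    simp only [Matrix.mulVec, dotProduct, Matrix.mul_apply, Matrix.replicateCol_apply,
      Matrix.replicateRow_apply, Finset.sum_const, Finset.card_univ, Fintype.card_fin, one_smul]
    rw [Finset.sum_eq_single i]
    · simp [Pi.single_eq_same]
    · intro b _ hb
      simp [Pi.single_eq_of_ne hb]
    · intro hi; exact absurd (Finset.mem_univ i) hi
  rw [h]
  simp only [Pi.neg_apply, colRoot]
  ring

lemma det_matOf (hdiag : ∀ i, A i i = 2) (i : Fin r) : (matOf A i).det = -1 := by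
  rw [matOf]
  erw [Matrix.det_one_add_replicateCol_mul_replicateRow]
  have h : (Pi.single i 1 : Fin r → ℤ) ⬝ᵥ (-(colRoot A i)) = -2 := by
    simp only [dotProduct, Pi.neg_apply, Pi.single_apply, colRoot]
    rw [Finset.sum_eq_single i]
    · rw [if_pos rfl, hdiag]; ring
    · intro b _ hb
      rw [if_neg hb]; ring
    · intro hi; exact absurd (Finset.mem_univ i) hi
  rw [h]; ring

def mats (l : List (Fin r)) : Matrix (Fin r) (Fin r) ℤ := (l.map (matOf A)).prod

lemma mats_mulVec (l : List (Fin r)) (x : Fin r → ℤ) : (mats A l) *ᵥ x = act A l x := by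
  induction l with
  | nil => simp [mats, act_nil, oneE, Matrix.one_mulVec]
  | cons i l ih =>
      have h1 : mats A (i :: l) = matOf A i * mats A l := by simp [mats]
      rw [h1, act_cons, mulE, ← ih, ← Matrix.mulVec_mulVec, matOf_mulVec]

lemma det_mats (hdiag : ∀ i, A i i = 2) (l : List (Fin r)) :
    (mats A l).det = (-1 : ℤ) ^ l.length := by
  induction l with
  | nil => simp [mats]
  | cons i l ih =>
      have h1 : mats A (i :: l) = matOf A i * mats A l := by simp [mats]
      rw [h1, Matrix.det_mul, det_matOf A hdiag, ih, List.length_cons, pow_succ]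
      ring

lemma mats_eq_of_act_eq {l l' : List (Fin r)} (h : act A l = act A l') :
    mats A l = mats A l' := by
  apply Matrix.ext
  intro k m
  have h1 : ∀ (M : Matrix (Fin r) (Fin r) ℤ) (m : Fin r), (M *ᵥ (Pi.single m 1 : Fin r → ℤ)) = fun k => M k m := by
    intro M m
    funext k'
    simp only [Matrix.mulVec, dotProduct, Pi.single_apply]
    rw [Finset.sum_eq_single m]
    · simp
    · intro b _ hb; rw [if_neg hb]; ring
    · intro hm; exact absurd (Finset.mem_univ m) hm
  have h2 : mats A l *ᵥ (Pi.single m 1 : Fin r → ℤ) = mats A l' *ᵥ (Pi.single m 1 : Fin r → ℤ) := by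
    rw [mats_mulVec, mats_mulVec, h]
  have := congrFun h2 k
  rw [h1 (mats A l) m, h1 (mats A l') m] at this
  exact this

lemma act_parity (hdiag : ∀ i, A i i = 2) {l l' : List (Fin r)} (h : act A l = act A l') :
    l.length % 2 = l'.length % 2 := by
  have h1 : ((-1 : ℤ)) ^ l.length = (-1) ^ l'.length := by
    rw [← det_mats A hdiag, ← det_mats A hdiag, mats_eq_of_act_eq A h]
  rcases Nat.even_or_odd l.length with he | ho <;>
    rcases Nat.even_or_odd l'.length with he' | ho'
  · rw [Nat.even_iff] at he he'; omega
  · rw [he.neg_one_pow, ho'.neg_one_pow] at h1; norm_num at h1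
  · rw [ho.neg_one_pow, he'.neg_one_pow] at h1; norm_num at h1
  · rw [Nat.odd_iff] at ho ho'; omega

lemma len_parity (hdiag : ∀ i, A i i = 2) {w : Function.End (Fin r → ℤ)}
    (l : List (Fin r)) (h : act A l = w) : l.length % 2 = (len A w) % 2 := by
  obtain ⟨l', hl', hact⟩ := exists_min_word A ⟨l, h⟩
  rw [← hl']
  exact act_parity A hdiag (h.trans hact.symm)

lemma len_mul_sR_ne (hdiag : ∀ i, A i i = 2) {w : Function.End (Fin r → ℤ)}
    (hw : ∃ l : List (Fin r), act A l = w) (i : Fin r) :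
    len A (w * sR A i) ≠ len A w := by
  obtain ⟨l, hl, hact⟩ := exists_min_word A hw
  have h1 : act A (l ++ [i]) = w * sR A i := by
    rw [act_append, act_singleton, hact]
  have h2 := len_parity A hdiag (l ++ [i]) h1
  rw [List.length_append, List.length_singleton, hl] at h2
  omega

lemma hasWord_mul_sR {w : Function.End (Fin r → ℤ)}
    (hw : ∃ l : List (Fin r), act A l = w) (i : Fin r) :
    ∃ l : List (Fin r), act A l = w * sR A i := by
  obtain ⟨l, hact⟩ := hw
  exact ⟨l ++ [i], by rw [act_append, act_singleton, hact]⟩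

lemma len_mul_le {u v : Function.End (Fin r → ℤ)}
    (hu : ∃ l : List (Fin r), act A l = u) (lv : List (Fin r)) (hv : act A lv = v) :
    len A (u * v) ≤ len A u + lv.length := by
  obtain ⟨lu, hlu, hactu⟩ := exists_min_word A hu
  have : act A (lu ++ lv) = u * v := by rw [act_append, hactu, hv]
  have h := len_le A (lu ++ lv) this
  rw [List.length_append, hlu] at h
  exact h

/-! ### Rank-2 subgroups: words in two letters -/

section Rank2

variable (i j : Fin r)

def bw (lb : List Bool) : List (Fin r) := lb.map (fun t => cond t i j)

lemma bw_append (lb lb' : List Bool) : bw i j (lb ++ lb') = bw i j lb ++ bw i j lb' :=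
  List.map_append

lemma bw_length (lb : List Bool) : (bw i j lb).length = lb.length := List.length_map _

noncomputable def lenJ (d : Function.End (Fin r → ℤ)) : ℕ :=
  sInf {n | ∃ lb : List Bool, lb.length = n ∧ act A (bw i j lb) = d}

lemma lenJ_le {d : Function.End (Fin r → ℤ)} (lb : List Bool) (h : act A (bw i j lb) = d) :
    lenJ A i j d ≤ lb.length :=
  Nat.sInf_le ⟨lb, rfl, h⟩

lemma exists_min_bword {d : Function.End (Fin r → ℤ)}
    (hd : ∃ lb : List Bool, act A (bw i j lb) = d) :
    ∃ lb : List Bool, lb.length = lenJ A i j d ∧ act A (bw i j lb) = d := by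
  obtain ⟨lb, hlb⟩ := hd
  exact Nat.sInf_mem (⟨lb.length, lb, rfl, hlb⟩ : {n | ∃ lb : List Bool,
    lb.length = n ∧ act A (bw i j lb) = d}.Nonempty)

/-! the coefficient 4-tuple of a two-letter word -/

def stepT (a b : ℤ) (t : Bool) (T : ℤ × ℤ × ℤ × ℤ) : ℤ × ℤ × ℤ × ℤ :=
  match t with
  | true => (-(1 + T.1 + b * T.2.1), T.2.1, -(T.2.2.1 + b * T.2.2.2), T.2.2.2)
  | false => (T.1, -(a * T.1 + T.2.1), T.2.2.1, -(1 + a * T.2.2.1 + T.2.2.2))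

def tup (a b : ℤ) (lb : List Bool) : ℤ × ℤ × ℤ × ℤ :=
  lb.foldl (fun T t => stepT a b t T) (0, 0, 0, 0)

lemma tup_concat (a b : ℤ) (lb : List Bool) (t : Bool) :
    tup a b (lb ++ [t]) = stepT a b t (tup a b lb) := by
  simp [tup, List.foldl_append]

variable (hdiag : ∀ i, A i i = 2)

include hdiag in
lemma act_bw_rep (hij : i ≠ j) (lb : List Bool) (x : Fin r → ℤ) :
    act A (bw i j lb) x = x +
      ((tup (A i j) (A j i) lb).1 * x i + (tup (A i j) (A j i) lb).2.1 * x j) • colRoot A i +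
      ((tup (A i j) (A j i) lb).2.2.1 * x i + (tup (A i j) (A j i) lb).2.2.2 * x j) •
        colRoot A j := by
  induction lb using List.reverseRecOn generalizing x with
  | nil =>
      simp only [bw, List.map_nil, act_nil, oneE, tup, List.foldl_nil]
      funext k
      simp only [Pi.add_apply, Pi.smul_apply, smul_eq_mul]
      ring
  | append_singleton lb t ih =>
      rw [bw_append, act_append]
      have hsingle : act A (bw i j [t]) = sR A (cond t i j) := by
        simp [bw, act_singleton]
      rw [hsingle, mulE, tup_concat]
      rw [ih (sR A (cond t i j) x)]
      have hxi' : ∀ k, sR A (cond t i j) x k = x k - x (cond t i j) * A k (cond t i j) :=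
        fun k => sR_apply A (cond t i j) x k
      cases t with
      | true =>
          simp only [cond_true] at hxi' ⊢
          funext k
          simp only [Pi.add_apply, Pi.smul_apply, smul_eq_mul, stepT]
          rw [hxi' k, hxi' i, hxi' j, hdiag]
          simp only [colRoot]
          ring
      | false =>
          simp only [cond_false] at hxi' ⊢
          funext k
          simp only [Pi.add_apply, Pi.smul_apply, smul_eq_mul, stepT]
          rw [hxi' k, hxi' i, hxi' j, hdiag]
          simp only [colRoot]
          ring

variable (hfin : (weylMonoid A : Set (Function.End (Fin r → ℤ))).Finite)

include hdiag hfin in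
lemma pair_indep (hij : i ≠ j) (c d : ℤ)
    (h : c • colRoot A i + d • colRoot A j = 0) : c = 0 ∧ d = 0 := by
  set cc : Fin r → ℤ := fun k => (if k = i then c else 0) + (if k = j then d else 0) with hcc
  have hlc : lc A cc = c • colRoot A i + d • colRoot A j := by
    funext k
    simp only [lc, hcc, Pi.add_apply, Pi.smul_apply, smul_eq_mul, colRoot]
    have hsplit : ∀ m : Fin r, ((if m = i then c else 0) + (if m = j then d else 0)) * A k m
        = (if m = i then c * A k m else 0) + (if m = j then d * A k m else 0) := by
      intro m; split_ifs <;> ring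
    rw [Finset.sum_congr rfl (fun m _ => hsplit m), Finset.sum_add_distrib,
        Finset.sum_ite_eq' Finset.univ i (fun m => c * A k m),
        Finset.sum_ite_eq' Finset.univ j (fun m => d * A k m)]
    simp
  have h0 : lc A cc = 0 := by rw [hlc, h]
  have h1 := lc_indep A hdiag hfin cc h0
  constructor
  · have h2 := h1 i
    have hcv : cc i = c := by simp [hcc, hij]
    rw [hcv] at h2; exact h2
  · have h2 := h1 j
    have hcv : cc j = d := by simp [hcc, Ne.symm hij]
    rw [hcv] at h2; exact h2

include hdiag hfin in
lemma tup_eq_of_act_eq (hij : i ≠ j) {lb lb' : List Bool}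
    (h : act A (bw i j lb) = act A (bw i j lb')) :
    tup (A i j) (A j i) lb = tup (A i j) (A j i) lb' := by
  have key : ∀ x : Fin r → ℤ,
      ((tup (A i j) (A j i) lb).1 * x i + (tup (A i j) (A j i) lb).2.1 * x j -
        ((tup (A i j) (A j i) lb').1 * x i + (tup (A i j) (A j i) lb').2.1 * x j)) •
          colRoot A i +
      ((tup (A i j) (A j i) lb).2.2.1 * x i + (tup (A i j) (A j i) lb).2.2.2 * x j -
        ((tup (A i j) (A j i) lb').2.2.1 * x i + (tup (A i j) (A j i) lb').2.2.2 * x j)) •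
          colRoot A j = 0 := by
    intro x
    have h1 := congrFun h x
    rw [act_bw_rep A hdiag i j hij lb x, act_bw_rep A hdiag i j hij lb' x] at h1
    rw [sub_smul, sub_smul]
    have h2 := sub_eq_zero_of_eq h1
    calc _ = (x +
        ((tup (A i j) (A j i) lb).1 * x i + (tup (A i j) (A j i) lb).2.1 * x j) • colRoot A i +
        ((tup (A i j) (A j i) lb).2.2.1 * x i + (tup (A i j) (A j i) lb).2.2.2 * x j) •
          colRoot A j) -
        (x +
        ((tup (A i j) (A j i) lb').1 * x i + (tup (A i j) (A j i) lb').2.1 * x j) • colRoot A i +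
        ((tup (A i j) (A j i) lb').2.2.1 * x i + (tup (A i j) (A j i) lb').2.2.2 * x j) •
          colRoot A j) := by abel
    _ = 0 := h2
  have hxi := key (Pi.single i 1)
  have hxj := key (Pi.single j 1)
  rw [Pi.single_eq_same, Pi.single_eq_of_ne (Ne.symm hij)] at hxi
  rw [Pi.single_eq_same, Pi.single_eq_of_ne hij] at hxj
  simp only [mul_one, mul_zero, add_zero, zero_add] at hxi hxj
  have e1 := pair_indep A hdiag i j hfin hij _ _ hxi
  have e2 := pair_indep A hdiag i j hfin hij _ _ hxj
  have g1 : (tup (A i j) (A j i) lb).1 = (tup (A i j) (A j i) lb').1 := by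
    have := e1.1; omega
  have g2 : (tup (A i j) (A j i) lb).2.2.1 = (tup (A i j) (A j i) lb').2.2.1 := by
    have := e1.2; omega
  have g3 : (tup (A i j) (A j i) lb).2.1 = (tup (A i j) (A j i) lb').2.1 := by
    have := e2.1; omega
  have g4 : (tup (A i j) (A j i) lb).2.2.2 = (tup (A i j) (A j i) lb').2.2.2 := by
    have := e2.2; omega
  ext
  · exact g1
  · exact g3
  · exact g2
  · exact g4

include hdiag in
lemma act_eq_of_tup_eq (hij : i ≠ j) {lb lb' : List Bool}
    (h : tup (A i j) (A j i) lb = tup (A i j) (A j i) lb') :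
    act A (bw i j lb) = act A (bw i j lb') := by
  funext x
  rw [act_bw_rep A hdiag i j hij lb x, act_bw_rep A hdiag i j hij lb' x, h]

end Rank2

/-! ### Alternating words and the dihedral case analysis -/

def altB : ℕ → Bool → List Bool
  | 0, _ => []
  | n + 1, t => altB n (!t) ++ [t]

lemma altB_length (n : ℕ) (t : Bool) : (altB n t).length = n := by
  induction n generalizing t with
  | zero => rfl
  | succ n ih => simp [altB, ih]

lemma exists_adj (lb : List Bool) (h : ¬ lb.Chain' (· ≠ ·)) :
    ∃ l1 t l2, lb = l1 ++ t :: t :: l2 := by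
  induction lb with
  | nil => exact absurd List.isChain_nil h
  | cons x l ih =>
      cases l with
      | nil => exact absurd (List.isChain_singleton x) h
      | cons y l2 =>
          by_cases hxy : x = y
          · exact ⟨[], x, l2, by rw [hxy]; rfl⟩
          · have h2 : ¬ (y :: l2).Chain' (· ≠ ·) := by
              intro hc
              exact h (List.isChain_cons_cons.2 ⟨hxy, hc⟩)
            obtain ⟨l1, t, l3, heq⟩ := ih h2
            exact ⟨x :: l1, t, l3, by rw [List.cons_append, ← heq]⟩

section Rank2b

variable (i j : Fin r) (hdiag : ∀ i, A i i = 2)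

include hdiag in
lemma act_bw_dup (l1 l2 : List Bool) (t : Bool) :
    act A (bw i j (l1 ++ t :: t :: l2)) = act A (bw i j (l1 ++ l2)) := by
  have h1 : bw i j (l1 ++ t :: t :: l2) =
      bw i j l1 ++ (cond t i j) :: (cond t i j) :: bw i j l2 := by
    simp [bw]
  have h2 : bw i j (l1 ++ l2) = bw i j l1 ++ bw i j l2 := bw_append i j l1 l2
  rw [h1, h2, act_append, act_append]
  congr 1
  rw [act_cons, act_cons, ← mul_assoc, sR_invol A hdiag, one_mul]

include hdiag in
lemma min_bword_chain {d : Function.End (Fin r → ℤ)} {lb : List Bool}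
    (hlen : lb.length = lenJ A i j d) (hact : act A (bw i j lb) = d) :
    lb.Chain' (· ≠ ·) := by
  by_contra h
  obtain ⟨l1, t, l2, rfl⟩ := exists_adj lb h
  have h1 : act A (bw i j (l1 ++ l2)) = d := by
    rw [← act_bw_dup A hdiag i j l1 l2 t]; exact hact
  have h2 := lenJ_le A i j (l1 ++ l2) h1
  simp only [List.length_append, List.length_cons] at hlen h2
  omega

lemma chain_concat_altB : ∀ (lb : List Bool) (t : Bool),
    (lb ++ [t]).Chain' (· ≠ ·) → lb ++ [t] = altB (lb.length + 1) t := by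
  intro lb
  induction lb using List.reverseRecOn with
  | nil =>
      intro t _
      simp [altB]
  | append_singleton lb s ih =>
      intro t hch
      replace hch := List.isChain_append.1 hch
      obtain ⟨hch1, _, hlast⟩ := hch
      have hst : s ≠ t := by
        apply hlast s _ t _
        · rw [List.getLast?_concat]; rfl
        · rfl
      have hs : s = !t := by cases s <;> cases t <;> simp_all
      have hind := ih s hch1
      have : (lb ++ [s]) ++ [t] = altB (lb.length + 1) (!t) ++ [t] := by
        rw [hind, hs]
      rw [this]
      have hlen : (lb ++ [s]).length + 1 = lb.length + 2 := by simp
      rw [hlen]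
      rfl

lemma altB_decomp (m : ℕ) : ∀ (k : ℕ) (t : Bool), ∃ t', altB (k + m) t = altB k t' ++ altB m t := by
  induction m with
  | zero => intro k t; exact ⟨t, by simp [altB]⟩
  | succ m ih =>
      intro k t
      obtain ⟨t', ht'⟩ := ih k (!t)
      refine ⟨t', ?_⟩
      have h1 : k + (m + 1) = (k + m) + 1 := by omega
      rw [h1]
      show altB ((k + m) + 1) t = _
      rw [altB, ht']
      rw [List.append_assoc]
      rfl

end Rank2b

/-! numerical verification in the six finite cases -/

def posOK (a b : ℤ) (m : ℕ) : Prop := ∀ n, n < m →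
  0 ≤ 1 + 2 * (tup a b (altB n false)).1 + b * (tup a b (altB n false)).2.1 ∧
  0 ≤ 2 * (tup a b (altB n false)).2.2.1 + b * (tup a b (altB n false)).2.2.2

def braidOK (a b : ℤ) (m : ℕ) : Prop := tup a b (altB m false) = tup a b (altB m true)

instance (a b : ℤ) (m : ℕ) : Decidable (posOK a b m) := by
  unfold posOK; infer_instance

instance (a b : ℤ) (m : ℕ) : Decidable (braidOK a b m) := by
  unfold braidOK; infer_instance

lemma case00 : posOK 0 0 2 ∧ braidOK 0 0 2 := by decide
lemma case11 : posOK (-1) (-1) 3 ∧ braidOK (-1) (-1) 3 := by decide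
lemma case12 : posOK (-1) (-2) 4 ∧ braidOK (-1) (-2) 4 := by decide
lemma case21 : posOK (-2) (-1) 4 ∧ braidOK (-2) (-1) 4 := by decide
lemma case13 : posOK (-1) (-3) 6 ∧ braidOK (-1) (-3) 6 := by decide
lemma case31 : posOK (-3) (-1) 6 ∧ braidOK (-3) (-1) 6 := by decide

/-! ### Excluding `a·b ≥ 4` via finiteness -/

def qmul (M N : ℤ × ℤ × ℤ × ℤ) : ℤ × ℤ × ℤ × ℤ :=
  (M.1 * N.1 + M.2.1 * N.2.2.1, M.1 * N.2.1 + M.2.1 * N.2.2.2,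
   M.2.2.1 * N.1 + M.2.2.2 * N.2.2.1, M.2.2.1 * N.2.1 + M.2.2.2 * N.2.2.2)

def MP (a b : ℤ) : ℕ → ℤ × ℤ × ℤ × ℤ
  | 0 => (1, 0, 0, 1)
  | N + 1 => qmul (MP a b N) (-1, a, -b, a * b - 1)

def cheb (τ : ℤ) : ℕ → ℤ
  | 0 => 0
  | 1 => 1
  | n + 2 => τ * cheb τ (n + 1) - cheb τ n

lemma cheb_mono {τ : ℤ} (hτ : 2 ≤ τ) : ∀ n, 0 ≤ cheb τ n ∧ cheb τ n < cheb τ (n + 1) := by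
  intro n
  induction n with
  | zero => simp [cheb]
  | succ n ih =>
      obtain ⟨h1, h2⟩ := ih
      have h3 : cheb τ (n + 2) = τ * cheb τ (n + 1) - cheb τ n := rfl
      constructor
      · linarith
      · rw [h3]
        nlinarith [mul_nonneg (by linarith : (0:ℤ) ≤ τ - 2) (by linarith : (0:ℤ) ≤ cheb τ (n+1))]

lemma cheb_ge_one {τ : ℤ} (hτ : 2 ≤ τ) {n : ℕ} (hn : 1 ≤ n) : 1 ≤ cheb τ n := by
  induction n with
  | zero => omega
  | succ n ih =>
      rcases Nat.eq_or_lt_of_le hn with h | h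
      · have : n = 0 := by omega
        rw [this]; rfl
      · have h1 : 1 ≤ n := by omega
        have h2 := (cheb_mono hτ n).2
        have := ih h1
        linarith

lemma MP_formula (a b : ℤ) : ∀ N : ℕ,
    MP a b (N + 1) = (-(cheb (a*b-2) (N+1)) - cheb (a*b-2) N, cheb (a*b-2) (N+1) * a,
      -(cheb (a*b-2) (N+1)) * b, cheb (a*b-2) (N+1) * (a*b-1) - cheb (a*b-2) N) := by
  intro N
  induction N with
  | zero =>
      show qmul (1,0,0,1) (-1, a, -b, a*b-1) = _
      simp only [qmul, cheb]
      norm_num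
  | succ N ih =>
      show qmul (MP a b (N+1)) (-1, a, -b, a*b-1) = _
      rw [ih]
      have h3 : cheb (a*b-2) (N + 2) = (a*b-2) * cheb (a*b-2) (N + 1) - cheb (a*b-2) N := rfl
      simp only [qmul, h3]
      refine Prod.ext ?_ (Prod.ext ?_ (Prod.ext ?_ ?_)) <;> simp <;> ring

lemma MP_ne_id {a b : ℤ} (hab : 4 ≤ a * b) {N : ℕ} (hN : 1 ≤ N) :
    MP a b N ≠ (1, 0, 0, 1) := by
  intro h
  obtain ⟨M, rfl⟩ : ∃ M, N = M + 1 := ⟨N - 1, by omega⟩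
  rw [MP_formula] at h
  have h2 : cheb (a*b-2) (M+1) * a = 0 := by
    have := congrArg (fun T : ℤ × ℤ × ℤ × ℤ => T.2.1) h
    simpa using this
  have h3 : 1 ≤ cheb (a*b-2) (M+1) := cheb_ge_one (by linarith) (by omega)
  have h4 : a ≠ 0 := by
    intro h5; rw [h5, zero_mul] at hab; omega
  rcases mul_eq_zero.1 h2 with h5 | h5
  · omega
  · exact h4 h5

section PowFin

variable (hfin : (weylMonoid A : Set (Function.End (Fin r → ℤ))).Finite)

include hfin in
lemma exists_pow_one {w winv : Function.End (Fin r → ℤ)} (hw : w ∈ weylMonoid A)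
    (h1 : winv * w = 1) (h2 : w * winv = 1) : ∃ N, 1 ≤ N ∧ w ^ N = 1 := by
  have hfsub : Finite (weylMonoid A : Set (Function.End (Fin r → ℤ))) := hfin.to_subtype
  have hmap : ∃ m n : ℕ, m ≠ n ∧ (⟨w ^ m, pow_mem hw m⟩ :
      (weylMonoid A : Set (Function.End (Fin r → ℤ)))) = ⟨w ^ n, pow_mem hw n⟩ :=
    Finite.exists_ne_map_eq_of_infinite _
  obtain ⟨m, n, hmn, heqS⟩ := hmap
  have heq2 : w ^ m = w ^ n := by
    have := congrArg Subtype.val heqS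
    simpa using this
  have hcancel : ∀ k : ℕ, w ^ k * winv ^ k = 1 := by
    intro k
    induction k with
    | zero => simp
    | succ k ih =>
        rw [pow_succ' w, pow_succ winv, mul_assoc w (w ^ k), ← mul_assoc (w ^ k), ih,
          one_mul, h2]
  have key : ∀ m n : ℕ, m < n → w ^ m = w ^ n → w ^ (n - m) = 1 := by
    intro m n hlt heq
    have e1 : w ^ n = w ^ (n - m) * w ^ m := by
      rw [← pow_add]
      congr 1
      omega
    calc w ^ (n - m) = w ^ (n - m) * (w ^ m * winv ^ m) := by rw [hcancel, mul_one]
    _ = w ^ n * winv ^ m := by rw [e1, mul_assoc]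
    _ = w ^ m * winv ^ m := by rw [heq]
    _ = 1 := hcancel m
  rcases Nat.lt_or_ge m n with h | h
  · exact ⟨n - m, by omega, key m n h heq2⟩
  · have h' : n < m := by omega
    exact ⟨m - n, by omega, key n m h' heq2.symm⟩

end PowFin

section Rank2c

variable (i j : Fin r)
variable (hfin : (weylMonoid A : Set (Function.End (Fin r → ℤ))).Finite)

include hdiag in
lemma proj_pow (hij : i ≠ j) : ∀ (N : ℕ) (x : Fin r → ℤ),
    ((sR A i * sR A j) ^ N) x i =
      (MP (A i j) (A j i) N).1 * x i + (MP (A i j) (A j i) N).2.1 * x j ∧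
    ((sR A i * sR A j) ^ N) x j =
      (MP (A i j) (A j i) N).2.2.1 * x i + (MP (A i j) (A j i) N).2.2.2 * x j := by
  intro N
  induction N with
  | zero =>
      intro x
      constructor <;> · show x _ = _; simp [MP]
  | succ N ih =>
      intro x
      have hP : ((sR A i * sR A j) ^ (N+1)) x = ((sR A i * sR A j) ^ N) ((sR A i * sR A j) x) := by
        rw [pow_succ]; rfl
      have hxi : (sR A i * sR A j) x i = -(x i) + A i j * x j := by
        rw [mulE, sR_apply, sR_apply, hdiag]
        ring
      have hxj : (sR A i * sR A j) x j = -(A j i) * x i + (A i j * A j i - 1) * x j := by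
        rw [mulE, sR_apply, sR_apply, sR_apply, hdiag]
        ring
      obtain ⟨e1, e2⟩ := ih ((sR A i * sR A j) x)
      rw [hxi, hxj] at e1 e2
      have hMPs : MP (A i j) (A j i) (N+1) =
          qmul (MP (A i j) (A j i) N) (-1, A i j, -(A j i), A i j * A j i - 1) := rfl
      constructor
      · rw [hP, e1, hMPs]
        simp only [qmul]; ring
      · rw [hP, e2, hMPs]
        simp only [qmul]; ring

include hdiag hfin in
lemma ab_le_three (hij : i ≠ j) : A i j * A j i ≤ 3 := by
  by_contra hcon
  push_neg at hcon
  have hab : 4 ≤ A i j * A j i := hcon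
  have hPmem : sR A i * sR A j ∈ weylMonoid A :=
    Submonoid.mul_mem _ (Submonoid.subset_closure ⟨i, rfl⟩) (Submonoid.subset_closure ⟨j, rfl⟩)
  have hinv1 : (sR A j * sR A i) * (sR A i * sR A j) = 1 := by
    rw [mul_assoc, ← mul_assoc (sR A i), sR_invol A hdiag, one_mul, sR_invol A hdiag]
  have hinv2 : (sR A i * sR A j) * (sR A j * sR A i) = 1 := by
    rw [mul_assoc, ← mul_assoc (sR A j), sR_invol A hdiag, one_mul, sR_invol A hdiag]
  obtain ⟨N, hN1, hNP⟩ := exists_pow_one A hfin hPmem hinv1 hinv2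
  have hMP : MP (A i j) (A j i) N = (1, 0, 0, 1) := by
    have kxi := (proj_pow A hdiag i j hij N (Pi.single i 1)).1
    have kxi' := (proj_pow A hdiag i j hij N (Pi.single i 1)).2
    have kxj := (proj_pow A hdiag i j hij N (Pi.single j 1)).1
    have kxj' := (proj_pow A hdiag i j hij N (Pi.single j 1)).2
    rw [hNP, oneE] at kxi kxi' kxj kxj'
    rw [Pi.single_eq_same, Pi.single_eq_of_ne (Ne.symm hij)] at kxi kxi'
    rw [Pi.single_eq_same, Pi.single_eq_of_ne hij] at kxj kxj'
    simp only [mul_one, mul_zero, add_zero, zero_add] at kxi kxi' kxj kxj'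
    refine Prod.ext ?_ (Prod.ext ?_ (Prod.ext ?_ ?_))
    · show _ = (1 : ℤ); omega
    · show _ = (0 : ℤ); omega
    · show _ = (0 : ℤ); omega
    · show _ = (1 : ℤ); omega
  exact MP_ne_id hab hN1 hMP

include hdiag hfin in
lemma rank2_pos (hij : i ≠ j) (hoffij : A i j ≤ 0) (hoffji : A j i ≤ 0)
    (hz : A i j = 0 ↔ A j i = 0) {d : Function.End (Fin r → ℤ)}
    (hd : ∃ lb : List Bool, act A (bw i j lb) = d)
    (hasc : lenJ A i j d < lenJ A i j (d * sR A i)) :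
    ∃ lam mu : ℤ, 0 ≤ lam ∧ 0 ≤ mu ∧
      d (colRoot A i) = lam • colRoot A i + mu • colRoot A j := by
  have hab3 : A i j * A j i ≤ 3 := ab_le_three A hdiag i j hfin hij
  have hcases : ∃ m : ℕ, 1 ≤ m ∧ posOK (A i j) (A j i) m ∧ braidOK (A i j) (A j i) m := by
    rcases eq_or_ne (A i j) 0 with h0 | h0
    · have hb0 : A j i = 0 := hz.1 h0
      exact ⟨2, by norm_num, by rw [h0, hb0]; exact case00.1, by rw [h0, hb0]; exact case00.2⟩
    · have hb0 : A j i ≠ 0 := fun hh => h0 (hz.2 hh)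
      have ha1 : A i j ≤ -1 := by omega
      have hb1 : A j i ≤ -1 := by omega
      have ha3 : -3 ≤ A i j := by nlinarith
      have hb3 : -3 ≤ A j i := by nlinarith
      have hdisj : (A i j = -1 ∧ A j i = -1) ∨ (A i j = -1 ∧ A j i = -2) ∨
          (A i j = -2 ∧ A j i = -1) ∨ (A i j = -1 ∧ A j i = -3) ∨
          (A i j = -3 ∧ A j i = -1) := by
        set a := A i j with haa
        set b := A j i with hbb
        clear_value a b
        interval_cases a <;> interval_cases b <;> revert hab3 <;> decide
      rcases hdisj with ⟨h1, h2⟩ | ⟨h1, h2⟩ | ⟨h1, h2⟩ | ⟨h1, h2⟩ | ⟨h1, h2⟩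
      · exact ⟨3, by norm_num, by rw [h1, h2]; exact case11.1, by rw [h1, h2]; exact case11.2⟩
      · exact ⟨4, by norm_num, by rw [h1, h2]; exact case12.1, by rw [h1, h2]; exact case12.2⟩
      · exact ⟨4, by norm_num, by rw [h1, h2]; exact case21.1, by rw [h1, h2]; exact case21.2⟩
      · exact ⟨6, by norm_num, by rw [h1, h2]; exact case13.1, by rw [h1, h2]; exact case13.2⟩
      · exact ⟨6, by norm_num, by rw [h1, h2]; exact case31.1, by rw [h1, h2]; exact case31.2⟩
  obtain ⟨m, hm1, hpos, hbraid⟩ := hcases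
  obtain ⟨lb, hlblen, hlbact⟩ := exists_min_bword A i j hd
  rcases Nat.eq_zero_or_pos (lenJ A i j d) with hn0 | hnpos
  · have hlb0 : lb = [] := List.length_eq_zero_iff.1 (by omega)
    have hd1 : d = 1 := by rw [← hlbact, hlb0]; simp [bw]
    refine ⟨1, 0, by norm_num, by norm_num, ?_⟩
    rw [hd1, oneE]
    simp
  · have hchain := min_bword_chain A hdiag i j hlblen hlbact
    have hlbne : lb ≠ [] := by
      intro h; rw [h] at hlblen; simp at hlblen; omega
    rcases List.eq_nil_or_concat lb with h | ⟨lb', t, hcc⟩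
    · exact absurd h hlbne
    rw [List.concat_eq_append] at hcc
    subst hcc
    have haltB : lb' ++ [t] = altB (lb'.length + 1) t := chain_concat_altB lb' t hchain
    have hlen' : lb'.length + 1 = lenJ A i j d := by
      rw [← hlblen]; simp
    cases t with
    | true =>
        exfalso
        have h1 : act A (bw i j (lb' ++ [true])) = act A (bw i j lb') * sR A i := by
          rw [bw_append, act_append]; congr 1
        have h2 : act A (bw i j lb') = d * sR A i := by
          rw [← hlbact, h1, mul_assoc, sR_invol A hdiag, mul_one]
        have h3 := lenJ_le A i j lb' h2
        omega
    | false =>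
        have hlbeq : lb' ++ [false] = altB (lenJ A i j d) false := by
          rw [haltB, hlen']
        by_cases hnm : lenJ A i j d < m
        · -- positivity case
          have hdact : act A (bw i j (altB (lenJ A i j d) false)) = d := by
            rw [← hlbeq]; exact hlbact
          have hrep := act_bw_rep A hdiag i j hij (altB (lenJ A i j d) false) (colRoot A i)
          rw [hdact] at hrep
          obtain ⟨hp1, hp2⟩ := hpos (lenJ A i j d) hnm
          refine ⟨1 + 2 * (tup (A i j) (A j i) (altB (lenJ A i j d) false)).1 +
              A j i * (tup (A i j) (A j i) (altB (lenJ A i j d) false)).2.1,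
            2 * (tup (A i j) (A j i) (altB (lenJ A i j d) false)).2.2.1 +
              A j i * (tup (A i j) (A j i) (altB (lenJ A i j d) false)).2.2.2,
            hp1, hp2, ?_⟩
          rw [hrep]
          funext k
          simp only [Pi.add_apply, Pi.smul_apply, smul_eq_mul, colRoot]
          rw [hdiag]
          ring
        · -- braid contradiction case
          exfalso
          push_neg at hnm
          obtain ⟨t', hdec⟩ := altB_decomp m (lenJ A i j d - m) false
          have hnn : (lenJ A i j d - m) + m = lenJ A i j d := by omega
          have hd2 : act A (bw i j (altB (lenJ A i j d - m) t' ++ altB m false)) = d := by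
            rw [← hdec, hnn, ← hlbeq]
            exact hlbact
          have hbr : act A (bw i j (altB m false)) = act A (bw i j (altB m true)) :=
            act_eq_of_tup_eq A hdiag i j hij hbraid
          have hswap : act A (bw i j (altB (lenJ A i j d - m) t' ++ altB m true)) = d := by
            rw [bw_append, act_append, ← hbr, ← act_append, ← bw_append]
            exact hd2
          obtain ⟨m', rfl⟩ : ∃ m', m = m' + 1 := ⟨m - 1, by omega⟩
          have hsplit : altB (m' + 1) true = altB m' false ++ [true] := rfl
          have hw : act A (bw i j ((altB (lenJ A i j d - (m'+1)) t' ++ altB m' false)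
              ++ [true])) = d := by
            rw [List.append_assoc, ← hsplit]
            exact hswap
          have h1 : act A (bw i j ((altB (lenJ A i j d - (m'+1)) t' ++ altB m' false) ++ [true]))
              = act A (bw i j (altB (lenJ A i j d - (m'+1)) t' ++ altB m' false)) * sR A i := by
            rw [bw_append, act_append]; congr 1
          have hshort : act A (bw i j (altB (lenJ A i j d - (m'+1)) t' ++ altB m' false))
              = d * sR A i := by
            calc act A (bw i j (altB (lenJ A i j d - (m'+1)) t' ++ altB m' false))
                = (act A (bw i j (altB (lenJ A i j d - (m'+1)) t' ++ altB m' false)) * sR A i)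
                  * sR A i := by
                  rw [mul_assoc, sR_invol A hdiag, mul_one]
              _ = act A (bw i j ((altB (lenJ A i j d - (m'+1)) t' ++ altB m' false) ++ [true]))
                  * sR A i := by rw [h1]
              _ = d * sR A i := by rw [hw]
          have h4 := lenJ_le A i j _ hshort
          have h5 : (altB (lenJ A i j d - (m'+1)) t' ++ altB m' false).length
              = (lenJ A i j d - (m'+1)) + m' := by
            simp [altB_length]
          omega

end Rank2c

/-! ### Positivity of the images of simple roots -/

def IsPos (v : Fin r → ℤ) : Prop := ∃ c : Fin r → ℤ, (∀ k, 0 ≤ c k) ∧ v = lc A c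

lemma lc_single (i : Fin r) : lc A (Pi.single i 1) = colRoot A i := by
  funext k
  simp only [lc, colRoot, Pi.single_apply]
  rw [Finset.sum_eq_single i]
  · simp
  · intro b _ hb; rw [if_neg hb]; ring
  · intro hi; exact absurd (Finset.mem_univ i) hi

lemma isPos_root (i : Fin r) : IsPos A (colRoot A i) :=
  ⟨Pi.single i 1, fun k => by
    classical
    rcases eq_or_ne k i with h | h
    · subst h; simp
    · simp [Pi.single_apply, h], (lc_single A i).symm⟩

lemma lc_smul (t : ℤ) (c : Fin r → ℤ) : t • lc A c = lc A (fun k => t * c k) := by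
  funext k
  simp only [Pi.smul_apply, smul_eq_mul, lc, Finset.mul_sum]
  apply Finset.sum_congr rfl
  intro m _; ring

lemma isPos_comb {v w : Fin r → ℤ} (lam mu : ℤ) (hlam : 0 ≤ lam) (hmu : 0 ≤ mu)
    (hv : IsPos A v) (hw : IsPos A w) : IsPos A (lam • v + mu • w) := by
  obtain ⟨c1, hc1, rfl⟩ := hv
  obtain ⟨c2, hc2, rfl⟩ := hw
  refine ⟨fun k => lam * c1 k + mu * c2 k,
    fun k => add_nonneg (mul_nonneg hlam (hc1 k)) (mul_nonneg hmu (hc2 k)), ?_⟩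
  rw [lc_smul, lc_smul, ← lc_add]
  rfl

section MainPos

variable (hfin : (weylMonoid A : Set (Function.End (Fin r → ℤ))).Finite)
variable (hoff : ∀ i j, i ≠ j → A i j ≤ 0)
variable (hzero : ∀ i j, A i j = 0 ↔ A j i = 0)

include hdiag hfin hoff hzero in
theorem pos_main : ∀ n : ℕ, ∀ w : Function.End (Fin r → ℤ),
    (∃ l : List (Fin r), act A l = w) → len A w = n →
    ∀ i : Fin r, len A w < len A (w * sR A i) → IsPos A (w (colRoot A i)) := by
  intro n
  induction n using Nat.strong_induction_on with
  | _ n IH =>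
  intro w hword hlen i hgt
  rcases Nat.eq_zero_or_pos n with hn0 | hnpos
  · -- w = 1
    obtain ⟨l, hl, hact⟩ := exists_min_word A hword
    rw [hlen, hn0] at hl
    have hl0 : l = [] := List.length_eq_zero_iff.1 hl
    rw [hl0] at hact
    rw [← hact, act_nil, oneE]
    exact isPos_root A i
  -- peel the last letter of a minimal word
  obtain ⟨l, hl, hact⟩ := exists_min_word A hword
  have hlne : l ≠ [] := by
    intro h; rw [h] at hl; simp at hl; omega
  rcases List.eq_nil_or_concat l with h | ⟨l1, jj, hcc⟩
  · exact absurd h hlne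
  rw [List.concat_eq_append] at hcc
  subst hcc
  have hdecomp : w = act A l1 * sR A jj := by
    rw [← hact, act_append, act_singleton]
  have hwsjj : w * sR A jj = act A l1 := by
    rw [hdecomp, mul_assoc, sR_invol A hdiag, mul_one]
  have hlen_l1 : len A (act A l1) ≤ n - 1 := by
    have := len_le A l1 rfl
    have hh : l1.length = n - 1 := by
      have h2 : (l1 ++ [jj]).length = n := by rw [hl, hlen]
      simp at h2
      omega
    omega
  have hij : jj ≠ i := by
    intro h
    rw [← h] at hgt
    rw [hwsjj] at hgt
    omega
  have hij' : i ≠ jj := fun h => hij h.symm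
  -- the minimizing decomposition
  set S : Set ℕ := {mm | ∃ (u dd : Function.End (Fin r → ℤ)) (lu : List (Fin r))
    (lbd : List Bool), act A lu = u ∧ act A (bw i jj lbd) = dd ∧ w = u * dd ∧
    len A u = mm ∧ len A u + lenJ A i jj dd ≤ n} with hS
  have hmem0 : len A (act A l1) ∈ S := by
    refine ⟨act A l1, sR A jj, l1, [false], rfl, ?_, ?_, rfl, ?_⟩
    · simp [bw, act_singleton]
    · rw [hdecomp]
    · have h1 : lenJ A i jj (sR A jj) ≤ 1 := by
        have hb : act A (bw i jj [false]) = sR A jj := by simp [bw, act_singleton]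
        have := lenJ_le A i jj [false] hb
        simpa using this
      omega
  have hSne : S.Nonempty := ⟨_, hmem0⟩
  obtain ⟨u, dd, lu, lbd, hu_act, hdd_act, hw_eq, hu_len, hsum⟩ := Nat.sInf_mem hSne
  have hu_word : ∃ l : List (Fin r), act A l = u := ⟨lu, hu_act⟩
  have hdd_word : ∃ lb : List Bool, act A (bw i jj lb) = dd := ⟨lbd, hdd_act⟩
  have hC1 : ∀ (k : Fin r) (tk : Bool), k = (cond tk i jj) →
      len A u < len A (u * sR A k) := by
    intro k tk hk
    by_contra hcon
    push_neg at hcon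
    have hne := len_mul_sR_ne A hdiag hu_word k
    have hlt : len A (u * sR A k) < len A u := by omega
    have hnew : len A (u * sR A k) ∈ S := by
      refine ⟨u * sR A k, sR A k * dd, lu ++ [k], tk :: lbd, ?_, ?_, ?_, rfl, ?_⟩
      · rw [act_append, act_singleton, hu_act]
      · have hh : bw i jj (tk :: lbd) = (cond tk i jj) :: bw i jj lbd := rfl
        rw [hh, act_cons, hdd_act, ← hk]
      · rw [mul_assoc, ← mul_assoc (sR A k), sR_invol A hdiag, one_mul, hw_eq]
      · have h1 : lenJ A i jj (sR A k * dd) ≤ lenJ A i jj dd + 1 := by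
          obtain ⟨lbm, hlbm_len, hlbm_act⟩ := exists_min_bword A i jj hdd_word
          have hb : act A (bw i jj (tk :: lbm)) = sR A k * dd := by
            have hh : bw i jj (tk :: lbm) = (cond tk i jj) :: bw i jj lbm := rfl
            rw [hh, act_cons, hlbm_act, ← hk]
          have := lenJ_le A i jj (tk :: lbm) hb
          simp only [List.length_cons] at this
          omega
        omega
    have := Nat.sInf_le hnew
    omega
  have hC1i : len A u < len A (u * sR A i) := hC1 i true rfl
  have hC1j : len A u < len A (u * sR A jj) := hC1 jj false rfl
  have hC2 : len A u ≤ n - 1 := by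
    have := Nat.sInf_le hmem0
    omega
  have hC3 : lenJ A i jj dd < lenJ A i jj (dd * sR A i) := by
    by_contra hcon
    push_neg at hcon
    have h1 : w * sR A i = u * (dd * sR A i) := by
      rw [hw_eq, mul_assoc]
    obtain ⟨lbm, hlbm_len, hlbm_act⟩ := exists_min_bword A i jj ⟨lbd ++ [true], by
      rw [bw_append, act_append, hdd_act]⟩
    have h2 : len A (w * sR A i) ≤ len A u + lenJ A i jj (dd * sR A i) := by
      rw [h1]
      have := len_mul_le A hu_word (bw i jj lbm) hlbm_act
      rw [bw_length, hlbm_len] at this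
      exact this
    rw [hlen] at hgt
    omega
  obtain ⟨lam, mu, hlam0, hmu0, hroots⟩ :=
    rank2_pos A hdiag i jj hfin hij' (hoff i jj hij') (hoff jj i hij'.symm)
      (hzero i jj) hdd_word hC3
  have hposu_i : IsPos A (u (colRoot A i)) :=
    IH (len A u) (by omega) u hu_word rfl i hC1i
  have hposu_j : IsPos A (u (colRoot A jj)) :=
    IH (len A u) (by omega) u hu_word rfl jj hC1j
  have humem : u ∈ weylMonoid A := (mem_weylMonoid_iff A).2 hu_word
  have hfinal : w (colRoot A i) = lam • u (colRoot A i) + mu • u (colRoot A jj) := by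
    rw [hw_eq, mulE, hroots, mem_add A humem, mem_smul A humem, mem_smul A humem]
  rw [hfinal]
  exact isPos_comb A lam mu hlam0 hmu0 hposu_i hposu_j

include hdiag hfin hoff hzero in
theorem L1 (lam : Fin r → ℤ) (hlam : ∀ k, 0 ≤ lam k) :
    ∀ n : ℕ, ∀ w : Function.End (Fin r → ℤ),
    (∃ l : List (Fin r), act A l = w) → len A w = n → rootLE A (w lam) lam := by
  intro n
  induction n using Nat.strong_induction_on with
  | _ n IH =>
  intro w hword hlen
  rcases Nat.eq_zero_or_pos n with hn0 | hnpos
  · obtain ⟨l, hl, hact⟩ := exists_min_word A hword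
    rw [hlen, hn0] at hl
    rw [List.length_eq_zero_iff.1 hl] at hact
    rw [← hact, act_nil, oneE]
    exact rootLE_refl A lam
  obtain ⟨l, hl, hact⟩ := exists_min_word A hword
  have hlne : l ≠ [] := by
    intro h; rw [h] at hl; simp at hl; omega
  rcases List.eq_nil_or_concat l with h | ⟨l1, jj, hcc⟩
  · exact absurd h hlne
  rw [List.concat_eq_append] at hcc
  subst hcc
  have hdecomp : w = act A l1 * sR A jj := by
    rw [← hact, act_append, act_singleton]
  have hlen1 : len A (act A l1) = n - 1 := by
    have h1 := len_le A l1 rfl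
    have hh : l1.length = n - 1 := by
      have h2 : (l1 ++ [jj]).length = n := by rw [hl, hlen]
      simp at h2; omega
    apply le_antisymm (by omega)
    by_contra hcon
    push_neg at hcon
    obtain ⟨l2, hl2len, hl2act⟩ := exists_min_word A ⟨l1, rfl⟩
    have h3 : act A (l2 ++ [jj]) = w := by
      rw [act_append, act_singleton, hl2act, ← hdecomp]
    have h4 := len_le A (l2 ++ [jj]) h3
    simp only [List.length_append, List.length_singleton] at h4
    omega
  have hposjj : IsPos A (act A l1 (colRoot A jj)) := by
    apply pos_main A hdiag hfin hoff hzero (n - 1) (act A l1) ⟨l1, rfl⟩ hlen1 jj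
    rw [hlen1, ← hdecomp, hlen]
    omega
  obtain ⟨c, hc, hceq⟩ := hposjj
  have hIH : rootLE A (act A l1 lam) lam :=
    IH (n-1) (by omega) (act A l1) ⟨l1, rfl⟩ hlen1
  rw [rootLE_iff] at hIH ⊢
  obtain ⟨c1, hc1, heq1⟩ := hIH
  have hl1mem : act A l1 ∈ weylMonoid A := act_mem A l1
  have hwlam : w lam = act A l1 lam + (-(lam jj)) • (act A l1 (colRoot A jj)) := by
    rw [hdecomp, mulE, sR_eq_sub, mem_add A hl1mem, mem_smul A hl1mem]
  refine ⟨fun k => c1 k + lam jj * c k,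
    fun k => add_nonneg (hc1 k) (mul_nonneg (hlam jj) (hc k)), ?_⟩
  rw [hwlam, hceq]
  have hsplit : lc A (fun k => c1 k + lam jj * c k) = lc A c1 + lam jj • lc A c := by
    rw [lc_smul, ← lc_add]
    rfl
  rw [hsplit]
  nth_rewrite 1 [heq1]
  rw [neg_smul]
  abel

end MainPos

/-! ### Final assembly -/

section Final

variable (hfin : (weylMonoid A : Set (Function.End (Fin r → ℤ))).Finite)
variable (hoff : ∀ i j, i ≠ j → A i j ≤ 0)
variable (hzero : ∀ i j, A i j = 0 ↔ A j i = 0)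

include hdiag hfin hoff hzero in
lemma self_mem_weightSet (lam : Fin r → ℤ) (hlam : ∀ k, 0 ≤ lam k) :
    lam ∈ weightSet A lam := by
  intro w hw
  obtain ⟨l, hl⟩ := (mem_weylMonoid_iff A).1 hw
  exact L1 A hdiag hfin hoff hzero lam hlam (len A w) w ⟨l, hl⟩ rfl

include hdiag hfin in
lemma weightSet_finite (lam : Fin r → ℤ) (hlam : ∀ k, 0 ≤ lam k) :
    (weightSet A lam).Finite := by
  apply Set.Finite.subset
    (Set.Finite.pi (fun k : Fin r => Set.finite_Icc (-(Qf A hfin lam lam)) (Qf A hfin lam lam)))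
  intro μ hμ
  obtain ⟨w, hwmem, hdom, hQeq⟩ := exists_dominant_rep A hdiag hfin μ
  have hle : rootLE A (w μ) lam := hμ w hwmem
  have hQle : Qf A hfin (w μ) (w μ) ≤ Qf A hfin lam lam :=
    Qf_mono_dominant A hdiag hfin hdom hlam hle
  have hQμ : Qf A hfin μ μ ≤ Qf A hfin lam lam := by rw [← hQeq]; exact hQle
  intro k _
  simp only [Set.mem_Icc]
  have h1 := abs_le_Qf A hfin μ k
  have h2 := abs_le.1 (le_trans h1 hQμ)
  exact h2

end Final

end Stmt16

theorem stmt_16 {r : ℕ} (hr : 0 < r) (A : Fin r → Fin r → ℤ)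
    (hdiag : ∀ i, A i i = 2)
    (hoff : ∀ i j, i ≠ j → A i j ≤ 0)
    (hzero : ∀ i j, A i j = 0 ↔ A j i = 0)
    (hindec : ∀ s : Set (Fin r), s.Nonempty → s ≠ Set.univ →
      ∃ i ∈ s, ∃ j, j ∉ s ∧ A i j ≠ 0)
    (hfin : (weylMonoid A : Set (Function.End (Fin r → ℤ))).Finite)
    (lam mu : Fin r → ℤ) (hlam : ∀ i, 0 ≤ lam i) (hmu : ∀ i, 0 ≤ mu i)
    (hle : rootLE A mu lam) (hne : mu ≠ lam) :
    (weightSet A mu).ncard < (weightSet A lam).ncard := by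
  have hsub : weightSet A mu ⊆ weightSet A lam := by
    intro x hx w hw
    exact Stmt16.rootLE_trans A (hx w hw) hle
  have hlamin : lam ∈ weightSet A lam :=
    Stmt16.self_mem_weightSet A hdiag hfin hoff hzero lam hlam
  have hlamnot : lam ∉ weightSet A mu := by
    intro hbad
    have h1 : rootLE A lam mu := by
      have := hbad 1 (Submonoid.one_mem _)
      rwa [Stmt16.oneE] at this
    exact hne (Stmt16.rootLE_antisymm A hdiag hfin hle h1)
  have hss : weightSet A mu ⊂ weightSet A lam :=
    (Set.ssubset_iff_of_subset hsub).2 ⟨lam, hlamin, hlamnot⟩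
  exact Set.ncard_lt_ncard hss (Stmt16.weightSet_finite A hdiag hfin lam hlam)
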